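/- arXiv:2510.06545 — 4 statements merged into one kernel-verified Lean document; each statement's English description precedes it below -/
import Mathlib

section
/- Let a finite-horizon MDP with finite state and action types, transition kernel τ, initial distribution μ, horizon T and real-valued reward r be given, and let π be a policy. Then for every time t ≤ T, state s and action a: exp(Q^π_t(s,a)) equals the expectation of ∏_{u=t}^{T} exp(r(s_u,a_u)) over the random trajectory started with s_t = s and a_t = a and continued by a_u ∼ π_u(s_u) and s_{u+1} ∼ τ(s_u,a_u); and exp(V^π_t(s)) equals the same expectation with additionally a_t ∼ π_t(s). Equivalently, Q^π_t(s,a) = log p_π(O_{t:T}=1 | s_t=s, a_t=a) and V^π_t(s) = log p_π(O_{t:T}=1 | s_t=s), where the optimality variables O_u are, given the trajectory, independent Bernoulli with p(O_u = 1 | s_u,a_u) = exp r(s_u,a_u). -/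
open scoped BigOperators ENNReal

/-- A finite-horizon MDP: finite nonempty state and action types, transition kernel,
initial distribution, horizon `T` (time steps `0,…,T`), and non-positive real reward. -/
structure MDP where
  S : Type
  A : Type
  [fintS : Fintype S]
  [fintA : Fintype A]
  [deceqS : DecidableEq S]
  [deceqA : DecidableEq A]
  [noneS : Nonempty S]
  [noneA : Nonempty A]
  tk : S → A → PMF S
  init : PMF S
  T : ℕ
  r : S → A → ℝ
  r_nonpos : ∀ s a, r s a ≤ 0

attribute [instance] MDP.fintS MDP.fintA MDP.deceqS MDP.deceqA MDP.noneS MDP.noneA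

/-- A policy: a family of action distributions, one for each time step and state. -/
abbrev MDP.Policy (M : MDP) : Type := ℕ → M.S → PMF M.A

/-- Deterministic transitions: every `τ(s,a)` is a point mass. -/
def MDP.Det (M : MDP) : Prop := ∀ s a, ∃ s', M.tk s a = PMF.pure s'

/-- Soft `Q` for a (possibly time-indexed) reward `r'`, indexed by the number of remaining
steps `k` (so that the actual time is `M.T - k`):
`Q_T(s,a) = r'_T(s,a)` and, for `t < T`,
`Q_t(s,a) = r'_t(s,a) + log E_{s'∼τ(s,a)}[exp V_{t+1}(s')]` with
`V_t(s) = log E_{a∼π_t(s)}[exp Q_t(s,a)]`. -/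
noncomputable def QrevR (M : MDP) (r' : ℕ → M.S → M.A → ℝ) (π : M.Policy) :
    ℕ → M.S → M.A → ℝ
  | 0 => fun s a => r' M.T s a
  | (k+1) => fun s a => r' (M.T - (k+1)) s a +
      Real.log (∑ s' : M.S, (M.tk s a s').toReal *
        Real.exp (Real.log (∑ a' : M.A, ((π (M.T - k) s') a').toReal *
          Real.exp (QrevR M r' π k s' a'))))

/-- Soft `Q^{π,r'}_t` at actual time `t`. -/
noncomputable def softQR (M : MDP) (r' : ℕ → M.S → M.A → ℝ) (π : M.Policy)
    (t : ℕ) : M.S → M.A → ℝ :=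
  QrevR M r' π (M.T - t)

/-- Soft `Q^π_t` for the MDP's own reward. -/
noncomputable def softQ (M : MDP) (π : M.Policy) (t : ℕ) : M.S → M.A → ℝ :=
  softQR M (fun _ => M.r) π t

/-- Soft `V^π_t(s) = log E_{a∼π_t(s)}[exp Q^π_t(s,a)]`. -/
noncomputable def softV (M : MDP) (π : M.Policy) (t : ℕ) (s : M.S) : ℝ :=
  Real.log (∑ a : M.A, ((π t s) a).toReal * Real.exp (softQ M π t s a))

/-- A trajectory `ξ = (s_0,…,s_T, a_0,…,a_T)`. -/
abbrev MDP.Traj (M : MDP) : Type := (Fin (M.T + 1) → M.S) × (Fin (M.T + 1) → M.A)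

/-- The probability of a trajectory under policy `π`:
`s_0 ∼ μ`, `a_t ∼ π_t(s_t)`, `s_{t+1} ∼ τ(s_t,a_t)`. -/
noncomputable def trajP (M : MDP) (π : M.Policy) (ξ : M.Traj) : ℝ≥0∞ :=
  M.init (ξ.1 0) * (∏ t : Fin (M.T + 1), (π t.val (ξ.1 t)) (ξ.2 t)) *
    ∏ t : Fin M.T, (M.tk (ξ.1 t.castSucc) (ξ.2 t.castSucc)) (ξ.1 t.succ)

open Classical in
/-- Kullback–Leibler divergence between two probability mass functions on a finite type,
valued in `[0,∞]`. -/
noncomputable def KLfin {α : Type} [Fintype α] (q p : α → ℝ≥0∞) : ℝ≥0∞ :=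
  if ∀ a, p a = 0 → q a = 0 then
    ENNReal.ofReal (∑ a : α, (q a).toReal * Real.log ((q a).toReal / (p a).toReal))
  else ⊤

/-- Occupancy measure: the probability that the state at time `t` is `s` under `p_π`. -/
noncomputable def occ (M : MDP) (π : M.Policy) (t : Fin (M.T + 1)) (s : M.S) : ℝ≥0∞ :=
  ∑ ξ : M.Traj, if ξ.1 t = s then trajP M π ξ else 0

/-- The return `J(π) = E_{ξ∼p_π}[Σ_t r(s_t,a_t)]`. -/
noncomputable def Jret (M : MDP) (π : M.Policy) : ℝ :=
  ∑ ξ : M.Traj, (trajP M π ξ).toReal * ∑ t : Fin (M.T + 1), M.r (ξ.1 t) (ξ.2 t)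

/-- Success probability `P(π) = E_{ξ∼p_π}[∏_t exp r(s_t,a_t)]`. -/
noncomputable def successP (M : MDP) (π : M.Policy) : ℝ :=
  ∑ ξ : M.Traj, (trajP M π ξ).toReal * ∏ t : Fin (M.T + 1), Real.exp (M.r (ξ.1 t) (ξ.2 t))

/-- Normalisation of a nonzero, finite weight function on a finite type into a `PMF`. -/
noncomputable def normPMF {α : Type} [Fintype α] (f : α → ℝ≥0∞)
    (h0 : ∃ a, f a ≠ 0) (hfin : ∀ a, f a ≠ ∞) : PMF α :=
  PMF.normalize f
    (fun h => by obtain ⟨a, ha⟩ := h0; exact ha (ENNReal.tsum_eq_zero.mp h a))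
    (by
      rw [tsum_fintype]
      exact (ENNReal.sum_lt_top.mpr fun a _ => (hfin a).lt_top).ne)

/-- The control-as-inference operator:
`G(π)_t(a|s) ∝ π_t(a|s)·exp(Q^π_t(s,a))`. -/
noncomputable def Gop (M : MDP) (π : M.Policy) : M.Policy := fun t s =>
  normPMF (fun a => (π t s) a * ENNReal.ofReal (Real.exp (softQ M π t s a)))
    (by
      obtain ⟨a, ha⟩ := (π t s).support_nonempty
      exact ⟨a, mul_ne_zero (((π t s).mem_support_iff a).mp ha)
        (ENNReal.ofReal_pos.mpr (Real.exp_pos _)).ne'⟩)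
    (fun a => ENNReal.mul_ne_top (PMF.apply_ne_top _ _) ENNReal.ofReal_ne_top)

/-- The control-as-inference sequence: `π^G_0 = p`, `π^G_{i+1} = G(π^G_i)`. -/
noncomputable def Gseq (M : MDP) (p : M.Policy) : ℕ → M.Policy
  | 0 => p
  | (k+1) => Gop M (Gseq M p k)

/-- The Boltzmann policy `π^δ_t(a|s) ∝ exp(Q^π_t(s,a)/δ)`. -/
noncomputable def Boltz (M : MDP) (π : M.Policy) (δ : ℝ) : M.Policy := fun t s =>
  normPMF (fun a => ENNReal.ofReal (Real.exp (softQ M π t s a / δ)))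
    ⟨Classical.arbitrary M.A, (ENNReal.ofReal_pos.mpr (Real.exp_pos _)).ne'⟩
    (fun _ => ENNReal.ofReal_ne_top)

/-- Boltzmann incoherence `κ_δ(π) = KL(p_π ‖ p_{π^δ})`. -/
noncomputable def kappaDelta (M : MDP) (π : M.Policy) (δ : ℝ) : ℝ≥0∞ :=
  KLfin (trajP M π) (trajP M (Boltz M π δ))

private lemma sum_pull_if {α : Type} [Fintype α] (P : Prop) [Decidable P] (F : α → ℝ) :
    ∑ x : α, (if P then F x else 0) = if P then ∑ x : α, F x else 0 := by
  split_ifs <;> simp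

private lemma pmf_sum_pos {α : Type} [Fintype α] (p : PMF α) (f : α → ℝ)
    (hf : ∀ a, 0 < f a) : 0 < ∑ a : α, (p a).toReal * f a := by
  obtain ⟨a, ha⟩ := p.support_nonempty
  refine Finset.sum_pos' (fun b _ => mul_nonneg ENNReal.toReal_nonneg (hf b).le)
    ⟨a, Finset.mem_univ a, ?_⟩
  exact mul_pos (ENNReal.toReal_pos ((p.mem_support_iff a).mp ha) (PMF.apply_ne_top p a)) (hf a)

private lemma sum_cons {S : Type} [Fintype S] (n : ℕ) (F : (Fin (n+1) → S) → ℝ) :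
    ∑ f, F f = ∑ x : S, ∑ f : Fin n → S, F (Fin.cons x f) := by
  rw [← (Fin.consEquiv (fun _ => S)).sum_comp F, Fintype.sum_prod_type]
  rfl

private lemma collapse2 {S A B : Type} [Fintype S] [Fintype A] [Fintype B]
    [DecidableEq S] [DecidableEq A]
    (c : S → ℝ) (d : S → A → ℝ) (X : B → ℝ) (e1 : B → S) (e2 : B → A) :
    ∑ x : S, c x * ∑ y : A, d x y * ∑ b : B, (if e1 b = x ∧ e2 b = y then X b else 0)
      = ∑ b : B, c (e1 b) * d (e1 b) (e2 b) * X b := by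
  simp only [Finset.mul_sum, mul_ite, mul_zero]
  conv_lhs => enter [2, x]; rw [Finset.sum_comm]
  rw [show (∑ x : S, ∑ b : B, ∑ y : A, (if e1 b = x ∧ e2 b = y then c x * (d x y * X b) else 0))
      = ∑ b : B, ∑ x : S, ∑ y : A, (if e1 b = x ∧ e2 b = y then c x * (d x y * X b) else 0)
    from Finset.sum_comm]
  apply Finset.sum_congr rfl
  intro b _
  simp only [ite_and, sum_pull_if, Finset.sum_ite_eq, Finset.mem_univ, if_true]
  ring

private lemma auxQ (M : MDP) (π : M.Policy) (k : ℕ) : ∀ (t : ℕ), t + k = M.T →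
    ∀ (s : M.S) (a : M.A),
    Real.exp (QrevR M (fun _ => M.r) π k s a) =
    ∑ ζ : (Fin (k + 1) → M.S) × (Fin (k + 1) → M.A),
      (if ζ.1 0 = s ∧ ζ.2 0 = a then
        (∏ u : Fin k,
            (M.tk (ζ.1 u.castSucc) (ζ.2 u.castSucc)) (ζ.1 u.succ) *
              (π (t + u.val + 1) (ζ.1 u.succ)) (ζ.2 u.succ)).toReal
       else 0) * ∏ u : Fin (k + 1), Real.exp (M.r (ζ.1 u) (ζ.2 u)) := by
  induction k with
  | zero =>
    intro t ht s a
    simp only [QrevR]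
    rw [Fintype.sum_prod_type]
    simp only [sum_cons]
    simp [Fin.prod_univ_one, ite_and, ite_mul, zero_mul, sum_pull_if, Finset.sum_ite_eq']
  | succ k ih =>
    intro t ht s a
    have h1 : M.T - (k+1) = t := by omega
    have h2 : M.T - k = t + 1 := by omega
    simp only [QrevR, h1, h2]
    have hin : ∀ s' : M.S, (0:ℝ) < ∑ a' : M.A, ((π (t+1) s') a').toReal *
        Real.exp (QrevR M (fun _ => M.r) π k s' a') :=
      fun s' => pmf_sum_pos _ _ fun _ => Real.exp_pos _
    have hexpin : ∀ s' : M.S, Real.exp (Real.log (∑ a' : M.A, ((π (t+1) s') a').toReal *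
        Real.exp (QrevR M (fun _ => M.r) π k s' a'))) = ∑ a' : M.A, ((π (t+1) s') a').toReal *
        Real.exp (QrevR M (fun _ => M.r) π k s' a') := fun s' => Real.exp_log (hin s')
    simp only [hexpin]
    have hout : (0:ℝ) < ∑ s' : M.S, ((M.tk s a) s').toReal *
        (∑ a' : M.A, ((π (t+1) s') a').toReal * Real.exp (QrevR M (fun _ => M.r) π k s' a')) :=
      pmf_sum_pos _ _ hin
    rw [Real.exp_add, Real.exp_log hout]
    simp only [ih (t+1) (by omega)]
    simp only [ite_mul, zero_mul]
    rw [collapse2 (fun x => ((M.tk s a) x).toReal)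
        (fun x y => ((π (t+1) x) y).toReal)
        (fun ζ : (Fin (k+1) → M.S) × (Fin (k+1) → M.A) =>
          (∏ u : Fin k, (M.tk (ζ.1 u.castSucc) (ζ.2 u.castSucc)) (ζ.1 u.succ) *
            (π (t + 1 + u.val + 1) (ζ.1 u.succ)) (ζ.2 u.succ)).toReal *
            ∏ u : Fin (k+1), Real.exp (M.r (ζ.1 u) (ζ.2 u)))
        (fun ζ => ζ.1 0) (fun ζ => ζ.2 0)]
    rw [Finset.mul_sum]
    conv_rhs => rw [Fintype.sum_prod_type, sum_cons (n := k+1)]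
    conv_rhs => enter [2, x, 2, f]; rw [sum_cons (n := k+1)]
    simp only [Fin.cons_zero, ite_and, sum_pull_if, Finset.sum_ite_eq', Finset.mem_univ,
      if_true]
    rw [Fintype.sum_prod_type]
    apply Finset.sum_congr rfl; intro f _
    apply Finset.sum_congr rfl; intro g _
    simp only [Fin.prod_univ_succ, Fin.castSucc_zero, Fin.cons_zero, Fin.cons_succ,
      ← Fin.succ_castSucc, Fin.val_succ, Fin.val_zero, add_zero, ENNReal.toReal_mul,
      show ∀ n : ℕ, t + (n+1) + 1 = t+1+n+1 from fun n => by omega]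
    ring
/-- for every `t ≤ T`, state `s` and action `a`, `exp(Q^π_t(s,a))` equals the
expectation of `∏_{u=t}^{T} exp r(s_u,a_u)` over the random suffix trajectory started with
`s_t = s`, `a_t = a` and continued by `a_u ∼ π_u(s_u)`, `s_{u+1} ∼ τ(s_u,a_u)`; and
`exp(V^π_t(s))` equals the same expectation with additionally `a_t ∼ π_t(s)`.
Equivalently `Q^π_t(s,a) = log p_π(O_{t:T}=1|s_t=s,a_t=a)` and
`V^π_t(s) = log p_π(O_{t:T}=1|s_t=s)` for the Bernoulli optimality variables
`p(O_u = 1|s_u,a_u) = exp r(s_u,a_u)`. -/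
theorem stmt0 (M : MDP) (π : M.Policy) (t : ℕ) (ht : t ≤ M.T) (s : M.S) (a : M.A) :
    (Real.exp (softQ M π t s a) =
      ∑ ζ : (Fin (M.T - t + 1) → M.S) × (Fin (M.T - t + 1) → M.A),
        (if ζ.1 0 = s ∧ ζ.2 0 = a then
          (∏ u : Fin (M.T - t),
              (M.tk (ζ.1 u.castSucc) (ζ.2 u.castSucc)) (ζ.1 u.succ) *
                (π (t + u.val + 1) (ζ.1 u.succ)) (ζ.2 u.succ)).toReal
         else 0) * ∏ u : Fin (M.T - t + 1), Real.exp (M.r (ζ.1 u) (ζ.2 u)))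
    ∧ (Real.exp (softV M π t s) =
      ∑ ζ : (Fin (M.T - t + 1) → M.S) × (Fin (M.T - t + 1) → M.A),
        (if ζ.1 0 = s then
          ((π t (ζ.1 0)) (ζ.2 0) *
            ∏ u : Fin (M.T - t),
              (M.tk (ζ.1 u.castSucc) (ζ.2 u.castSucc)) (ζ.1 u.succ) *
                (π (t + u.val + 1) (ζ.1 u.succ)) (ζ.2 u.succ)).toReal
         else 0) * ∏ u : Fin (M.T - t + 1), Real.exp (M.r (ζ.1 u) (ζ.2 u))) := by
  have hk : t + (M.T - t) = M.T := by omega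
  have hQ : ∀ a' : M.A, Real.exp (softQ M π t s a') =
      ∑ ζ : (Fin (M.T - t + 1) → M.S) × (Fin (M.T - t + 1) → M.A),
        (if ζ.1 0 = s ∧ ζ.2 0 = a' then
          (∏ u : Fin (M.T - t),
              (M.tk (ζ.1 u.castSucc) (ζ.2 u.castSucc)) (ζ.1 u.succ) *
                (π (t + u.val + 1) (ζ.1 u.succ)) (ζ.2 u.succ)).toReal
         else 0) * ∏ u : Fin (M.T - t + 1), Real.exp (M.r (ζ.1 u) (ζ.2 u)) :=
    fun a' => auxQ M π (M.T - t) t hk s a'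
  constructor
  · exact hQ a
  · have hVpos : 0 < ∑ a' : M.A, ((π t s) a').toReal * Real.exp (softQ M π t s a') :=
      pmf_sum_pos _ _ fun _ => Real.exp_pos _
    rw [softV, Real.exp_log hVpos]
    simp only [hQ]
    simp only [ite_mul, zero_mul, Finset.mul_sum, mul_ite, mul_zero]
    rw [Finset.sum_comm]
    apply Finset.sum_congr rfl; intro ζ _
    simp only [ite_and, sum_pull_if, Finset.sum_ite_eq, Finset.mem_univ, if_true,
      ENNReal.toReal_mul]
    by_cases h : ζ.1 0 = s
    · simp only [h, if_true, if_pos]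
      ring
    · simp only [h, if_false]
end

section
/- Let a finite-horizon MDP with real-valued reward be given, let f : (A → ℝ) → PMF A be any function, and let π be any policy. Define the iterated sequence π^B_0 = π and π^B_{k+1,t}(·|s) = f(Q^{π^B_k}_t(s,·)) for all t, s. Then the sequence stabilizes after at most T+1 steps: π^B_k = π^B_{T+1} for all k ≥ T+1, and π^B_{T+1} is a fixed point, i.e., π^B_{T+1,t}(·|s) = f(Q^{π^B_{T+1}}_t(s,·)) for all t, s; in particular, κ_f(π^B_{T+1}) = 0, so π^B_{T+1} is f-coherent. -/
open scoped BigOperators ENNReal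

/-- The iterated `f`-coherence sequence: `π^B_0 = π`,
`π^B_{k+1,t}(·|s) = f(Q^{π^B_k}_t(s,·))`. -/
noncomputable def iterB (M : MDP) (f : (M.A → ℝ) → PMF M.A) (π : M.Policy) : ℕ → M.Policy
  | 0 => π
  | (k+1) => fun t s => f (softQ M (iterB M f π k) t s)

lemma QrevR_congr (M : MDP) (r' : ℕ → M.S → M.A → ℝ) (π π' : M.Policy) :
    ∀ k : ℕ, (∀ j < k, π (M.T - j) = π' (M.T - j)) →
      QrevR M r' π k = QrevR M r' π' k := by
  intro k
  induction k with
  | zero => intro _; rfl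
  | succ k ih =>
    intro h
    funext s a
    simp only [QrevR]
    rw [ih (fun j hj => h j (hj.trans (Nat.lt_succ_self k))), h k (Nat.lt_succ_self k)]

lemma iterB_stab (M : MDP) (f : (M.A → ℝ) → PMF M.A) (π : M.Policy) :
    ∀ k t, M.T < t + (k + 1) → iterB M f π (k + 2) t = iterB M f π (k + 1) t := by
  intro k
  induction k with
  | zero =>
    intro t ht
    funext s
    show f (softQ M (iterB M f π 1) t s) = f (softQ M (iterB M f π 0) t s)
    have h0 : M.T - t = 0 := by omega
    unfold softQ softQR
    rw [h0]
    rfl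
  | succ k ih =>
    intro t ht
    funext s
    show f (softQ M (iterB M f π (k + 2)) t s) = f (softQ M (iterB M f π (k + 1)) t s)
    have : softQ M (iterB M f π (k + 2)) t = softQ M (iterB M f π (k + 1)) t := by
      unfold softQ softQR
      exact QrevR_congr M _ _ _ (M.T - t) (fun j hj => ih (M.T - j) (by omega))
    rw [this]

lemma KLfin_self {α : Type} [Fintype α] (q : α → ℝ≥0∞) : KLfin q q = 0 := by
  classical
  rw [KLfin, if_pos (fun a h => h)]
  have : ∀ a : α, (q a).toReal * Real.log ((q a).toReal / (q a).toReal) = 0 := by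
    intro a
    by_cases h : (q a).toReal = 0
    · simp [h]
    · rw [div_self h, Real.log_one, mul_zero]
  simp [this]

/-- the iterated sequence stabilizes after at most `T+1` steps, the limit is a
fixed point (`π^B_{T+1,t}(·|s) = f(Q^{π^B_{T+1}}_t(s,·))` for all `t,s`), hence
`κ_f(π^B_{T+1}) = 0`, i.e. `π^B_{T+1}` is `f`-coherent. -/
theorem stmt5 (M : MDP) (f : (M.A → ℝ) → PMF M.A) (π : M.Policy) :
    (∀ k, M.T + 1 ≤ k → iterB M f π k = iterB M f π (M.T + 1)) ∧
    (∀ t ≤ M.T, ∀ s, iterB M f π (M.T + 1) t s = f (softQ M (iterB M f π (M.T + 1)) t s)) ∧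
    KLfin (trajP M (iterB M f π (M.T + 1)))
      (trajP M (fun t s => f (softQ M (iterB M f π (M.T + 1)) t s))) = 0 := by
  have hstep : iterB M f π (M.T + 2) = iterB M f π (M.T + 1) := by
    funext t
    exact iterB_stab M f π M.T t (by omega)
  have hfix : ∀ t s, iterB M f π (M.T + 1) t s = f (softQ M (iterB M f π (M.T + 1)) t s) := by
    intro t s
    conv_lhs => rw [← hstep]
    rfl
  refine ⟨?_, fun t _ s => hfix t s, ?_⟩
  · intro k hk
    obtain ⟨m, rfl⟩ := Nat.exists_eq_add_of_le hk
    induction m with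
    | zero => rfl
    | succ m ihm =>
      have : M.T + 1 + (m + 1) = (M.T + 1 + m) + 1 := by ring
      rw [this]
      show (fun t s => f (softQ M (iterB M f π (M.T + 1 + m)) t s)) = _
      rw [ihm (by omega)]
      funext t s
      exact (hfix t s).symm
  · have : (fun t s => f (softQ M (iterB M f π (M.T + 1)) t s)) = iterB M f π (M.T + 1) := by
      funext t s; exact (hfix t s).symm
    rw [this]
    exact KLfin_self _
end

section
/- Let A be a finite nonempty type, p : PMF A a distribution with full support, and r : A → ℝ. Define q* : PMF A by q*(a) = p(a)·exp(r(a)) / Σ_{a'} p(a')·exp(r(a')). Then q* is the unique maximizer of the KL-regularized objective F(q) = E_{a∼q}[r(a)] − KL(q ‖ p) over all q : PMF A: for every q, F(q) ≤ F(q*), with equality if and only if q = q*. -/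
open scoped BigOperators ENNReal

/-- The KL-regularized objective `F(q) = E_{a∼q}[r(a)] − KL(q ‖ p)`, valued in `EReal`
(equal to `−∞` when `KL(q ‖ p) = ∞`). -/
noncomputable def KLreg {A : Type} [Fintype A] (r : A → ℝ) (p q : PMF A) : EReal :=
  ((∑ a : A, (q a).toReal * r a : ℝ) : EReal) -
    ((KLfin (fun a => q a) (fun a => p a) : ℝ≥0∞) : EReal)

/-- The tilted distribution `q*(a) = p(a)·exp(r(a)) / Σ_{a'} p(a')·exp(r(a'))`. -/
noncomputable def tiltedPMF {A : Type} [Fintype A] [Nonempty A] (p : PMF A)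
    (hp : ∀ a, p a ≠ 0) (r : A → ℝ) : PMF A :=
  normPMF (fun a => p a * ENNReal.ofReal (Real.exp (r a)))
    ⟨Classical.arbitrary A, mul_ne_zero (hp _) (ENNReal.ofReal_pos.mpr (Real.exp_pos _)).ne'⟩
    (fun a => ENNReal.mul_ne_top (PMF.apply_ne_top _ _) ENNReal.ofReal_ne_top)

private lemma klterm_le {x y : ℝ} (hx : 0 ≤ x) (hy : 0 < y) :
    x - y ≤ x * Real.log (x / y) := by
  rcases hx.eq_or_lt with h | h
  · rw [← h]; simpa using hy.le
  · have h1 : Real.log (y / x) ≤ y / x - 1 := Real.log_le_sub_one_of_pos (by positivity)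
    have hxy : Real.log (x / y) = - Real.log (y / x) := by
      rw [Real.log_div hy.ne' h.ne', Real.log_div h.ne' hy.ne']; ring
    have h2 : x * (y / x) = y := by field_simp
    rw [hxy]
    have h3 := mul_le_mul_of_nonneg_left h1 h.le
    rw [mul_sub, h2, mul_one] at h3
    linarith

private lemma klterm_lt {x y : ℝ} (hx : 0 ≤ x) (hy : 0 < y) (hne : x ≠ y) :
    x - y < x * Real.log (x / y) := by
  rcases hx.eq_or_lt with h | h
  · rw [← h]; simpa using hy
  · have hy1 : y / x ≠ 1 := fun hc => hne ((div_eq_one_iff_eq h.ne').mp hc).symm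
    have h1 : Real.log (y / x) < y / x - 1 :=
      Real.log_lt_sub_one_of_pos (by positivity) hy1
    have hxy : Real.log (x / y) = - Real.log (y / x) := by
      rw [Real.log_div hy.ne' h.ne', Real.log_div h.ne' hy.ne']; ring
    have h2 : x * (y / x) = y := by field_simp
    rw [hxy]
    have h3 := mul_lt_mul_of_pos_left h1 h
    rw [mul_sub, h2, mul_one] at h3
    linarith

private lemma gibbs {A : Type} [Fintype A] {f g : A → ℝ}
    (hf : ∀ a, 0 ≤ f a) (hg : ∀ a, 0 < g a)
    (hfs : ∑ a, f a = 1) (hgs : ∑ a, g a = 1) :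
    0 ≤ ∑ a, f a * Real.log (f a / g a) ∧
    ((∑ a, f a * Real.log (f a / g a)) = 0 → f = g) := by
  have key : ∀ a ∈ Finset.univ, f a - g a ≤ f a * Real.log (f a / g a) :=
    fun a _ => klterm_le (hf a) (hg a)
  have hsum : ∑ a, (f a - g a) = 0 := by
    rw [Finset.sum_sub_distrib, hfs, hgs]; ring
  constructor
  · calc (0 : ℝ) = ∑ a, (f a - g a) := hsum.symm
      _ ≤ _ := Finset.sum_le_sum key
  · intro h0
    by_contra hne
    obtain ⟨a0, ha0⟩ := Function.ne_iff.mp hne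
    have hlt : ∑ a, (f a - g a) < ∑ a, f a * Real.log (f a / g a) :=
      Finset.sum_lt_sum key ⟨a0, Finset.mem_univ _, klterm_lt (hf a0) (hg a0) ha0⟩
    rw [hsum, h0] at hlt
    exact lt_irrefl 0 hlt

/-- for a full-support `p` and any `r`, the tilted distribution `q*` is the
unique maximizer of `F(q) = E_{a∼q}[r(a)] − KL(q ‖ p)` over all `q : PMF A`. -/
theorem stmt9 {A : Type} [Fintype A] [Nonempty A] (p : PMF A) (hp : ∀ a, p a ≠ 0)
    (r : A → ℝ) (q : PMF A) :
    KLreg r p q ≤ KLreg r p (tiltedPMF p hp r) ∧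
    (KLreg r p q = KLreg r p (tiltedPMF p hp r) ↔ q = tiltedPMF p hp r) := by
  classical
  set qs := tiltedPMF p hp r with hqs
  set Z : ℝ := ∑ a : A, (p a).toReal * Real.exp (r a) with hZdef
  have hprpos : ∀ a, 0 < (p a).toReal := fun a =>
    ENNReal.toReal_pos (hp a) (PMF.apply_ne_top _ _)
  have hZpos : 0 < Z :=
    Finset.sum_pos (fun a _ => mul_pos (hprpos a) (Real.exp_pos _))
      ⟨Classical.arbitrary A, Finset.mem_univ _⟩
  have hsum1 : ∀ u : PMF A, ∑ a : A, (u a).toReal = 1 := by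
    intro u
    have h := u.tsum_coe
    rw [tsum_fintype] at h
    have h2 := congrArg ENNReal.toReal h
    rwa [ENNReal.toReal_sum (fun a _ => PMF.apply_ne_top _ _)] at h2
  -- value of the tilted PMF
  have hStoReal : (∑ b : A, p b * ENNReal.ofReal (Real.exp (r b))).toReal = Z := by
    rw [ENNReal.toReal_sum
      (fun a _ => ENNReal.mul_ne_top (PMF.apply_ne_top _ _) ENNReal.ofReal_ne_top)]
    exact Finset.sum_congr rfl fun a _ => by
      rw [ENNReal.toReal_mul, ENNReal.toReal_ofReal (Real.exp_pos _).le]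
  have hqsr : ∀ a, (qs a).toReal = (p a).toReal * Real.exp (r a) / Z := by
    intro a
    show ((tiltedPMF p hp r) a).toReal = _
    rw [tiltedPMF, normPMF, PMF.normalize_apply, tsum_fintype, ENNReal.toReal_mul,
      ENNReal.toReal_inv, hStoReal, ENNReal.toReal_mul,
      ENNReal.toReal_ofReal (Real.exp_pos _).le, div_eq_mul_inv]
  have hqspos : ∀ a, 0 < (qs a).toReal := fun a => by
    rw [hqsr a]; exact div_pos (mul_pos (hprpos a) (Real.exp_pos _)) hZpos
  -- KLfin as a real sum
  have hKL : ∀ u : PMF A, (KLfin (fun a => u a) (fun a => p a) : ℝ≥0∞)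
      = ENNReal.ofReal
          (∑ a : A, (u a).toReal * Real.log ((u a).toReal / (p a).toReal)) := by
    intro u
    rw [KLfin, if_pos]
    intro a ha
    exact absurd ha (hp a)
  -- KLreg as a real number
  have hreg : ∀ u : PMF A, KLreg r p u =
      (((∑ a : A, (u a).toReal * r a)
        - ∑ a : A, (u a).toReal * Real.log ((u a).toReal / (p a).toReal) : ℝ) : EReal) := by
    intro u
    have hnn := (gibbs (f := fun a => (u a).toReal) (g := fun a => (p a).toReal)
      (fun a => ENNReal.toReal_nonneg) hprpos (hsum1 u) (hsum1 p)).1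
    rw [KLreg, hKL u, EReal.coe_ennreal_ofReal, max_eq_left hnn, ← EReal.coe_sub]
  -- key identity
  have hid : ∀ u : PMF A,
      (∑ a : A, (u a).toReal * r a)
        - ∑ a : A, (u a).toReal * Real.log ((u a).toReal / (p a).toReal)
      = Real.log Z
        - ∑ a : A, (u a).toReal * Real.log ((u a).toReal / (qs a).toReal) := by
    intro u
    have hterm : ∀ a, (u a).toReal * Real.log ((u a).toReal / (qs a).toReal)
        = (u a).toReal * Real.log ((u a).toReal / (p a).toReal)
          - (u a).toReal * r a + (u a).toReal * Real.log Z := by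
      intro a
      rcases (ENNReal.toReal_nonneg : (0:ℝ) ≤ (u a).toReal).eq_or_lt with h | h
      · rw [← h]; ring
      · have l1 : Real.log ((u a).toReal / (qs a).toReal)
            = Real.log (u a).toReal - Real.log (qs a).toReal :=
          Real.log_div h.ne' (hqspos a).ne'
        have l2 : Real.log (qs a).toReal
            = Real.log (p a).toReal + r a - Real.log Z := by
          rw [hqsr a, Real.log_div (mul_pos (hprpos a) (Real.exp_pos _)).ne' hZpos.ne',
            Real.log_mul (hprpos a).ne' (Real.exp_pos _).ne', Real.log_exp]
        have l3 : Real.log ((u a).toReal / (p a).toReal)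
            = Real.log (u a).toReal - Real.log (p a).toReal :=
          Real.log_div h.ne' (hprpos a).ne'
        rw [l1, l2, l3]; ring
    rw [Finset.sum_congr rfl fun a _ => hterm a, Finset.sum_add_distrib,
      Finset.sum_sub_distrib, ← Finset.sum_mul, hsum1 u]
    ring
  have hklqs : ∑ a : A, (qs a).toReal * Real.log ((qs a).toReal / (qs a).toReal) = 0 :=
    Finset.sum_eq_zero fun a _ => by
      rw [div_self (hqspos a).ne', Real.log_one, mul_zero]
  have gq := gibbs (f := fun a => (q a).toReal) (g := fun a => (qs a).toReal)
    (fun a => ENNReal.toReal_nonneg) hqspos (hsum1 q) (hsum1 qs)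
  have hFq : KLreg r p q =
      ((Real.log Z
        - ∑ a : A, (q a).toReal * Real.log ((q a).toReal / (qs a).toReal) : ℝ) : EReal) := by
    rw [hreg q, hid q]
  have hFqs : KLreg r p qs = ((Real.log Z : ℝ) : EReal) := by
    rw [hreg qs, hid qs, hklqs, sub_zero]
  refine ⟨?_, ?_, ?_⟩
  · rw [hFq, hFqs]
    exact EReal.coe_le_coe_iff.mpr (by linarith [gq.1])
  · intro h
    rw [hFq, hFqs] at h
    have h' : Real.log Z
        - ∑ a : A, (q a).toReal * Real.log ((q a).toReal / (qs a).toReal)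
        = Real.log Z := EReal.coe_eq_coe_iff.mp h
    have h0 : ∑ a : A, (q a).toReal * Real.log ((q a).toReal / (qs a).toReal) = 0 := by
      linarith
    have hfg := gq.2 h0
    ext a
    exact (ENNReal.toReal_eq_toReal_iff' (PMF.apply_ne_top _ _) (PMF.apply_ne_top _ _)).mp
      (congrFun hfg a)
  · intro h
    rw [h]
end

section
/- There exists a finite-horizon MDP with stochastic (non-deterministic) transitions, real-valued reward, and a full-support prior policy p, such that the deterministic-case equivalence between re-conditioning and temperature scaling fails: the twice-iterated control-as-inference policy differs from the temperature-2 policy, i.e., π^G_2 ≠ π_α for α = 2. -/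
open scoped BigOperators ENNReal

/-- Temperature-`α` policy of the prior `p`: `π_{α,t}(a|s) ∝ p_t(a|s)·exp(Q^{p,αr}_t(s,a))`. -/
noncomputable def tempPolicy (M : MDP) (p : M.Policy) (α : ℝ) : M.Policy := fun t s =>
  normPMF (fun a => (p t s) a *
      ENNReal.ofReal (Real.exp (softQR M (fun _ s' a' => α * M.r s' a') p t s a)))
    (by
      obtain ⟨a, ha⟩ := (p t s).support_nonempty
      exact ⟨a, mul_ne_zero (((p t s).mem_support_iff a).mp ha)
        (ENNReal.ofReal_pos.mpr (Real.exp_pos _)).ne'⟩)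
    (fun a => ENNReal.mul_ne_top (PMF.apply_ne_top _ _) ENNReal.ofReal_ne_top)

/-- One folding step: the policy `∝ p_t(a|s)·exp(Q^{p,r_k}_t(s,a))` for a
time-indexed reward `rk`. -/
noncomputable def foldStep (M : MDP) (p : M.Policy) (rk : ℕ → M.S → M.A → ℝ) :
    M.Policy := fun t s =>
  normPMF (fun a => (p t s) a * ENNReal.ofReal (Real.exp (softQR M rk p t s a)))
    (by
      obtain ⟨a, ha⟩ := (p t s).support_nonempty
      exact ⟨a, mul_ne_zero (((p t s).mem_support_iff a).mp ha)
        (ENNReal.ofReal_pos.mpr (Real.exp_pos _)).ne'⟩)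
    (fun a => ENNReal.mul_ne_top (PMF.apply_ne_top _ _) ENNReal.ofReal_ne_top)

/-- Folded sequence (rewards and policies): `r_0 = r`, `π^F_0 = p`,
`π^F_{k+1,t}(a|s) ∝ p_t(a|s)·exp(Q^{p,r_k}_t(s,a))`,
`r_{k+1,t}(s,a) = r_0(s,a) + log π^F_{k+1,t}(a|s)`. -/
noncomputable def foldAux (M : MDP) (p : M.Policy) : ℕ → (ℕ → M.S → M.A → ℝ) × M.Policy
  | 0 => (fun _ => M.r, p)
  | (k+1) =>
      (fun t s a => M.r s a + Real.log (((foldStep M p (foldAux M p k).1 t s) a).toReal),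
        foldStep M p (foldAux M p k).1)

/-- The folded-sequence policy `π^F_k`. -/
noncomputable def foldPi (M : MDP) (p : M.Policy) (k : ℕ) : M.Policy := (foldAux M p k).2

/-- Cumulative folded sequence: as the folded sequence but with
`r_{k+1,t}(s,a) = r_{k,t}(s,a) + log π^H_{k+1,t}(a|s)`. -/
noncomputable def foldAuxH (M : MDP) (p : M.Policy) : ℕ → (ℕ → M.S → M.A → ℝ) × M.Policy
  | 0 => (fun _ => M.r, p)
  | (k+1) =>
      (fun t s a => (foldAuxH M p k).1 t s a +
          Real.log (((foldStep M p (foldAuxH M p k).1 t s) a).toReal),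
        foldStep M p (foldAuxH M p k).1)

/-- The cumulative folded-sequence policy `π^H_k`. -/
noncomputable def foldPiH (M : MDP) (p : M.Policy) (k : ℕ) : M.Policy := (foldAuxH M p k).2

noncomputable def Mex : MDP where
  S := Bool
  A := Bool
  tk := fun _ a => if a then PMF.uniformOfFintype Bool else PMF.pure false
  init := PMF.pure true
  T := 1
  r := fun s _ => if s then 0 else -1
  r_nonpos := by intro s a; split <;> norm_num

attribute [reducible] Mex

noncomputable def pex : Mex.Policy := fun _ _ => PMF.uniformOfFintype Bool

lemma normPMF_bool_apply (f : Bool → ℝ≥0∞) (h0 : ∃ a, f a ≠ 0) (hfin : ∀ a, f a ≠ ⊤)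
    (a : Bool) : normPMF f h0 hfin a = f a * (f false + f true)⁻¹ := by
  simp [normPMF, PMF.normalize_apply, tsum_fintype, Fintype.sum_bool, add_comm]



noncomputable def Ea (a : Bool) : ℝ := if a then (1 + Real.exp (-1))/2 else Real.exp (-1)
noncomputable def E2a (a : Bool) : ℝ := if a then (1 + Real.exp (-2))/2 else Real.exp (-2)
noncomputable def rS (s : Bool) : ℝ := if s then 0 else -1

lemma Ea_pos (a : Bool) : 0 < Ea a := by cases a <;> simp [Ea] <;> positivity
lemma E2a_pos (a : Bool) : 0 < E2a a := by cases a <;> simp [E2a] <;> positivity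

lemma pex_apply (t : ℕ) (s : Mex.S) (a : Mex.A) : pex t s a = 2⁻¹ := by
  show (PMF.uniformOfFintype Bool) a = 2⁻¹
  rw [PMF.uniformOfFintype_apply]; norm_num

lemma pex_toReal (t : ℕ) (s : Mex.S) (a : Mex.A) : (pex t s a).toReal = 2⁻¹ := by
  rw [pex_apply]; simp

lemma Mex_r (s : Mex.S) (a : Mex.A) : Mex.r s a = rS s := rfl



lemma unif_toReal (b : Bool) : ((PMF.uniformOfFintype Bool) b).toReal = 2⁻¹ := by
  rw [PMF.uniformOfFintype_apply]
  norm_num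

lemma softQ_zero_gen (π : Mex.Policy) (hπ : ∀ x x' : Bool, (((π 1 x : PMF Bool)) x').toReal = 2⁻¹)
    (s : Mex.S) (a : Mex.A) : softQ Mex π 0 s a = rS s + Real.log (Ea a) := by
  simp only [softQ, softQR, QrevR, Mex]
  norm_num
  have hπ' : ∀ x x' : Bool,
      (@DFunLike.coe (PMF Bool) Bool (fun _ => ℝ≥0∞) (PMF.instFunLike (α := Bool)) (π 1 x) x').toReal
        = 2⁻¹ := hπ
  simp only [hπ']
  rw [Real.exp_log (by norm_num : (0:ℝ) < 2⁻¹ + 2⁻¹),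
    Real.exp_log (by positivity : (0:ℝ) < 2⁻¹ * Real.exp (-1) + 2⁻¹ * Real.exp (-1))]
  cases a <;> cases s <;>
    simp [rS, Ea, PMF.pure_apply, unif_toReal] <;>
    ring_nf <;> exact Real.log_exp (-1)

lemma softQ_pex_zero (s : Mex.S) (a : Mex.A) :
    softQ Mex pex 0 s a = rS s + Real.log (Ea a) :=
  softQ_zero_gen pex (fun x x' => pex_toReal 1 x x') s a

lemma normPMF_bool_apply' (f : Mex.A → ℝ≥0∞) (h0 : ∃ a, f a ≠ 0) (hfin : ∀ a, f a ≠ ⊤)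
    (a : Mex.A) : normPMF f h0 hfin a = f a * (f false + f true)⁻¹ :=
  normPMF_bool_apply f h0 hfin a

/-- Key normalization computation. -/
lemma norm_ratio (g : Bool → ℝ) (hg : ∀ b, 0 < g b) (c : ℝ≥0∞) (hc0 : c ≠ 0)
    (hctop : c ≠ ⊤) (a : Bool) :
    (c * ENNReal.ofReal (g a)) * (c * ENNReal.ofReal (g false) + c * ENNReal.ofReal (g true))⁻¹
      = ENNReal.ofReal (g a / (g false + g true)) := by
  rw [← mul_add, ← ENNReal.ofReal_add (hg false).le (hg true).le,
    ENNReal.mul_inv (Or.inl hc0) (Or.inl hctop)]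
  have hsum : (0:ℝ) < g false + g true := add_pos (hg false) (hg true)
  rw [ENNReal.ofReal_div_of_pos hsum, div_eq_mul_inv]
  calc c * ENNReal.ofReal (g a) * (c⁻¹ * (ENNReal.ofReal (g false + g true))⁻¹)
      = (c * c⁻¹) * (ENNReal.ofReal (g a) * (ENNReal.ofReal (g false + g true))⁻¹) := by ring
    _ = ENNReal.ofReal (g a) * (ENNReal.ofReal (g false + g true))⁻¹ := by
        rw [ENNReal.mul_inv_cancel hc0 hctop, one_mul]

lemma softQ_pex_one (s : Mex.S) (a : Mex.A) : softQ Mex pex 1 s a = rS s := rfl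

lemma Gop_pex_one (s : Mex.S) (a : Mex.A) : Gop Mex pex 1 s a = 2⁻¹ := by
  simp only [Gop]
  rw [normPMF_bool_apply']
  rw [pex_apply, pex_apply, pex_apply]
  simp only [pex_apply, softQ_pex_one]
  rw [norm_ratio (fun _ => Real.exp (rS s)) (fun _ => Real.exp_pos _) 2⁻¹
    (by norm_num) (by norm_num) a]
  rw [show Real.exp (rS s) / (Real.exp (rS s) + Real.exp (rS s)) = 2⁻¹ by
    rw [← two_mul]; field_simp]
  rw [ENNReal.ofReal_inv_of_pos (by norm_num), ENNReal.ofReal_ofNat]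

lemma Gop_pex_one_toReal (s : Mex.S) (a : Mex.A) : ((Gop Mex pex 1 s) a).toReal = 2⁻¹ := by
  rw [Gop_pex_one]; simp

lemma softQ_Gop_zero (s : Mex.S) (a : Mex.A) :
    softQ Mex (Gop Mex pex) 0 s a = rS s + Real.log (Ea a) :=
  softQ_zero_gen (Gop Mex pex) (fun x x' => Gop_pex_one_toReal x x') s a

lemma Gop_pex_zero (s : Mex.S) (a : Mex.A) :
    Gop Mex pex 0 s a
      = ENNReal.ofReal ((Real.exp (rS s) * Ea a)
          / (Real.exp (rS s) * Ea false + Real.exp (rS s) * Ea true)) := by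
  simp only [Gop]
  rw [normPMF_bool_apply']
  rw [pex_apply, pex_apply, pex_apply]
  simp only [pex_apply, softQ_pex_zero, Real.exp_add]
  rw [Real.exp_log (Ea_pos a), Real.exp_log (Ea_pos false), Real.exp_log (Ea_pos true)]
  exact norm_ratio (fun b => Real.exp (rS s) * Ea b)
    (fun b => by have := Ea_pos b; positivity) 2⁻¹ (by norm_num) (by norm_num) a

lemma Gop2_zero (s : Mex.S) (a : Mex.A) :
    Gop Mex (Gop Mex pex) 0 s a
      = ENNReal.ofReal
          ((fun b => (Real.exp (rS s) * Ea b / (Real.exp (rS s) * Ea false + Real.exp (rS s) * Ea true))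
              * (Real.exp (rS s) * Ea b)) a
            / ((fun b => (Real.exp (rS s) * Ea b / (Real.exp (rS s) * Ea false + Real.exp (rS s) * Ea true))
              * (Real.exp (rS s) * Ea b)) false
              + (fun b => (Real.exp (rS s) * Ea b / (Real.exp (rS s) * Ea false + Real.exp (rS s) * Ea true))
              * (Real.exp (rS s) * Ea b)) true)) := by
  have hpos : ∀ b : Bool,
      0 < (Real.exp (rS s) * Ea b / (Real.exp (rS s) * Ea false + Real.exp (rS s) * Ea true))
          * (Real.exp (rS s) * Ea b) := by
    intro b
    have h0 := Ea_pos b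
    have h1 := Ea_pos false
    have h2 := Ea_pos true
    have he := Real.exp_pos (rS s)
    positivity
  rw [Gop]
  beta_reduce
  rw [normPMF_bool_apply']
  rw [Gop_pex_zero, Gop_pex_zero, Gop_pex_zero]
  simp only [Gop_pex_zero, softQ_Gop_zero, Real.exp_add]
  rw [Real.exp_log (Ea_pos a), Real.exp_log (Ea_pos false), Real.exp_log (Ea_pos true)]
  have hfac : ∀ b : Bool,
      0 ≤ Real.exp (rS s) * Ea b / (Real.exp (rS s) * Ea false + Real.exp (rS s) * Ea true) := by
    intro b
    have h0 := Ea_pos b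
    have h1 := Ea_pos false
    have h2 := Ea_pos true
    have he := Real.exp_pos (rS s)
    positivity
  rw [← ENNReal.ofReal_mul (hfac a), ← ENNReal.ofReal_mul (hfac false),
    ← ENNReal.ofReal_mul (hfac true)]
  have := norm_ratio
    (fun b => (Real.exp (rS s) * Ea b / (Real.exp (rS s) * Ea false + Real.exp (rS s) * Ea true))
      * (Real.exp (rS s) * Ea b)) hpos 1 one_ne_zero ENNReal.one_ne_top a
  simpa using this

lemma softQR2_zero (s : Mex.S) (a : Mex.A) :
    softQR Mex (fun _ s' a' => 2 * Mex.r s' a') pex 0 s a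
      = 2 * rS s + Real.log (E2a a) := by
  simp only [softQR, QrevR, Mex]
  norm_num
  simp only [pex, unif_toReal]
  rw [Real.exp_log (by norm_num : (0:ℝ) < 2⁻¹ + 2⁻¹),
    Real.exp_log (by positivity : (0:ℝ) < 2⁻¹ * Real.exp (-2) + 2⁻¹ * Real.exp (-2))]
  cases a <;> cases s <;>
    simp [rS, E2a, PMF.pure_apply, unif_toReal] <;>
    ring_nf <;> exact Real.log_exp (-2)

lemma tempPolicy_zero (s : Mex.S) (a : Mex.A) :
    tempPolicy Mex pex 2 0 s a
      = ENNReal.ofReal ((Real.exp (2 * rS s) * E2a a)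
          / (Real.exp (2 * rS s) * E2a false + Real.exp (2 * rS s) * E2a true)) := by
  simp only [tempPolicy]
  rw [normPMF_bool_apply']
  rw [pex_apply, pex_apply, pex_apply]
  simp only [pex_apply, softQR2_zero, Real.exp_add]
  rw [Real.exp_log (E2a_pos a), Real.exp_log (E2a_pos false), Real.exp_log (E2a_pos true)]
  exact norm_ratio (fun b => Real.exp (2 * rS s) * E2a b)
    (fun b => by have := E2a_pos b; positivity) 2⁻¹ (by norm_num) (by norm_num) a

lemma Mex_not_det : ¬ Mex.Det := by
  intro h
  obtain ⟨s', hs'⟩ := h true true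
  have hval : (2:ℝ≥0∞)⁻¹ = 1 := by
    calc (2:ℝ≥0∞)⁻¹ = (PMF.uniformOfFintype Bool) s' := by
          rw [PMF.uniformOfFintype_apply]; norm_num
      _ = (PMF.pure s') s' := by
          rw [show PMF.uniformOfFintype Bool = Mex.tk true true from rfl, hs']
      _ = 1 := by rw [PMF.pure_apply]; simp
  have := congrArg ENNReal.toReal hval
  norm_num at this

theorem stmt17_aux :
    ∃ M : MDP, ¬ M.Det ∧ ∃ p : M.Policy,
      (∀ (t : ℕ) (s : M.S) (a : M.A), (p t s) a ≠ 0) ∧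
      ∃ t ≤ M.T, ∃ s : M.S, Gseq M p 2 t s ≠ tempPolicy M p 2 t s := by
  refine ⟨Mex, Mex_not_det, pex, ?_, 0, Nat.zero_le _, true, ?_⟩
  · intro t s a; rw [pex_apply]; norm_num
  · intro h
    have hv : Gop Mex (Gop Mex pex) 0 true false = tempPolicy Mex pex 2 0 true false := by
      rw [show Gop Mex (Gop Mex pex) = Gseq Mex pex 2 from rfl]
      exact DFunLike.congr_fun h false
    rw [Gop2_zero, tempPolicy_zero] at hv
    simp only [Ea, E2a, rS] at hv
    norm_num at hv
    have hu : Real.exp (-2) = Real.exp (-1) * Real.exp (-1) := by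
      rw [← Real.exp_add]; norm_num
    set u := Real.exp (-1) with hu'
    have hupos : 0 < u := Real.exp_pos _
    have hult : u < 1 := by
      rw [hu', show (1:ℝ) = Real.exp 0 by simp]
      exact Real.exp_lt_exp.mpr (by norm_num)
    rw [ENNReal.ofReal_eq_ofReal_iff (by positivity) (by positivity)] at hv
    rw [hu] at hv
    have hD : 0 < u + (1+u)/2 := by positivity
    field_simp at hv
    have hq1 : 0 < (1-u)^2 := pow_pos (by linarith) 2
    have hq2 : 0 < u^2*(3*u+1)^2 := by positivity
    nlinarith [mul_pos hq2 hq1, hv, hupos, hult]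

/-- there is a finite-horizon MDP with stochastic (non-deterministic)
transitions and a full-support prior `p` for which the deterministic-case equivalence
fails: the twice-iterated control-as-inference policy differs from the temperature-2
policy, `π^G_2 ≠ π_α` for `α = 2`. -/
theorem stmt17 :
    ∃ M : MDP, ¬ M.Det ∧ ∃ p : M.Policy,
      (∀ (t : ℕ) (s : M.S) (a : M.A), (p t s) a ≠ 0) ∧
      ∃ t ≤ M.T, ∃ s : M.S, Gseq M p 2 t s ≠ tempPolicy M p 2 t s := by
  exact stmt17_aux
end
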